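/- Let 0 < α < 1 and let B_α be the diagonal matrix diag(α, 1, 1−α) acting on ℝ³. Then the dual cone of the power cone K_α equals the image B_α(K_α) = {B_α·x : x ∈ K_α}. -/

import Mathlib

open Real

/-- The power cone `K_α = {(x₁,x₂,x₃) : x₁ ≥ 0, x₃ ≥ 0, x₁^α·x₃^(1−α) ≥ |x₂|}`
(real powers are `Real.rpow`). -/
def Kpow (α : ℝ) : Set (Fin 3 → ℝ) :=
  {x | 0 ≤ x 0 ∧ 0 ≤ x 2 ∧ |x 1| ≤ x 0 ^ α * x 2 ^ (1 - α)}

/-- The dual cone of `C ⊆ ℝ³` with respect to the standard inner product. -/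
def dualCone (C : Set (Fin 3 → ℝ)) : Set (Fin 3 → ℝ) :=
  {y | ∀ x ∈ C, 0 ≤ y 0 * x 0 + y 1 * x 1 + y 2 * x 2}

private lemma amgm2 {α a b : ℝ} (hα0 : 0 < α) (hα1 : α < 1) (ha : 0 ≤ a) (hb : 0 ≤ b) :
    a ^ α * b ^ (1 - α) ≤ α * a + (1 - α) * b :=
  Real.geom_mean_le_arith_mean2_weighted hα0.le (by linarith) ha hb (by ring)

/-- For `0 < α < 1`, the dual of the power cone `K_α` is `B_α·K_α`, where
`B_α = diag(α, 1, 1−α)`. -/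
theorem dualCone_Kpow (α : ℝ) (hα0 : 0 < α) (hα1 : α < 1) :
    dualCone (Kpow α) =
      (fun x : Fin 3 → ℝ => ![α * x 0, x 1, (1 - α) * x 2]) '' Kpow α := by
  have h1α : 0 < 1 - α := by linarith
  ext y
  constructor
  · intro hy
    -- Key consequence of dual-cone membership
    have H : ∀ s t : ℝ, 0 ≤ s → 0 ≤ t →
        |y 1| * (s ^ α * t ^ (1 - α)) ≤ y 0 * s + y 2 * t := by
      intro s t hs ht
      set P := s ^ α * t ^ (1 - α) with hP
      have hP0 : 0 ≤ P := mul_nonneg (rpow_nonneg hs α) (rpow_nonneg ht _)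
      set e : ℝ := if 0 ≤ y 1 then -P else P with he
      have hxmem : (![s, e, t] : Fin 3 → ℝ) ∈ Kpow α := by
        refine ⟨hs, ht, ?_⟩
        show |e| ≤ s ^ α * t ^ (1 - α)
        rw [he]
        split <;> simp [abs_of_nonneg hP0, abs_of_nonpos (neg_nonpos.mpr hP0), hP, le_refl,
          abs_of_nonneg (rpow_nonneg hs α), abs_of_nonneg (rpow_nonneg ht (1 - α))]
      have h2 := hy _ hxmem
      have hye : y 1 * e = -(|y 1| * P) := by
        rw [he]
        split
        · rename_i h; rw [abs_of_nonneg h]; ring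
        · rename_i h; rw [abs_of_neg (lt_of_not_ge h)]; ring
      have : y 0 * s + y 1 * e + y 2 * t = y 0 * s + y 2 * t - |y 1| * P := by
        rw [hye]; ring
      simp only [Matrix.cons_val_zero, Matrix.cons_val_one, Matrix.head_cons,
        Matrix.cons_val_two, Matrix.tail_cons] at h2
      linarith [h2, this ▸ h2]
    have hy0 : 0 ≤ y 0 := by
      have := H 1 0 zero_le_one le_rfl
      rw [Real.one_rpow, Real.zero_rpow h1α.ne'] at this
      linarith
    have hy2 : 0 ≤ y 2 := by
      have := H 0 1 le_rfl zero_le_one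
      rw [Real.one_rpow, Real.zero_rpow hα0.ne'] at this
      linarith
    by_cases hy1 : y 1 = 0
    · refine ⟨![y 0 / α, 0, y 2 / (1 - α)], ?_, ?_⟩
      · refine ⟨?_, ?_, ?_⟩
        · show 0 ≤ y 0 / α; positivity
        · show 0 ≤ y 2 / (1 - α); positivity
        · show |(0:ℝ)| ≤ (y 0 / α) ^ α * (y 2 / (1 - α)) ^ (1 - α)
          rw [abs_zero]
          positivity
      · funext i
        fin_cases i <;>
          simp [hy1, hα0.ne', h1α.ne', div_mul_cancel₀, mul_div_cancel₀]
    · have hay1 : 0 < |y 1| := abs_pos.mpr hy1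
      -- y 0 > 0
      have hy0' : 0 < y 0 := by
        rcases hy0.lt_or_eq with h | h
        · exact h
        · exfalso
          set c : ℝ := (y 2 + |y 1|) / |y 1| with hc
          have hc0 : 0 ≤ c := by positivity
          have := H (c ^ α⁻¹) 1 (rpow_nonneg hc0 _) zero_le_one
          rw [Real.rpow_inv_rpow hc0 hα0.ne', Real.one_rpow, ← h] at this
          have hcc : |y 1| * (c * 1) = y 2 + |y 1| := by
            rw [hc]; field_simp
          rw [hcc] at this
          linarith
      have hy2' : 0 < y 2 := by
        rcases hy2.lt_or_eq with h | h
        · exact h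
        · exfalso
          set c : ℝ := (y 0 + |y 1|) / |y 1| with hc
          have hc0 : 0 ≤ c := by positivity
          have := H 1 (c ^ (1 - α)⁻¹) zero_le_one (rpow_nonneg hc0 _)
          rw [Real.rpow_inv_rpow hc0 h1α.ne', Real.one_rpow, ← h] at this
          have hcc : |y 1| * (1 * c) = y 0 + |y 1| := by
            rw [hc]; field_simp
          rw [hcc] at this
          linarith
      set a : ℝ := y 0 / α with ha
      set b : ℝ := y 2 / (1 - α) with hb
      have ha0 : 0 < a := by positivity
      have hb0 : 0 < b := by positivity
      set M : ℝ := a ^ α * b ^ (1 - α) with hM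
      have hM0 : 0 < M := by positivity
      -- the key bound |y 1| ≤ M
      have hkey : |y 1| ≤ M := by
        have := H (M / a) (M / b) (by positivity) (by positivity)
        have hsa : (M / a) ^ α * (M / b) ^ (1 - α) = 1 := by
          rw [Real.div_rpow hM0.le ha0.le, Real.div_rpow hM0.le hb0.le]
          rw [div_mul_div_comm, ← Real.rpow_add hM0]
          rw [show α + (1 - α) = 1 by ring, Real.rpow_one, hM]
          field_simp
        rw [hsa] at this
        have h1 : y 0 * (M / a) = α * M := by
          rw [ha]; field_simp
        have h2 : y 2 * (M / b) = (1 - α) * M := by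
          rw [hb]; field_simp
        rw [h1, h2] at this
        linarith
      refine ⟨![a, y 1, b], ⟨ha0.le, hb0.le, ?_⟩, ?_⟩
      · show |y 1| ≤ a ^ α * b ^ (1 - α)
        exact hkey
      · funext i
        fin_cases i <;> simp [ha, hb] <;> field_simp
  · rintro ⟨x, hx, rfl⟩
    intro z hz
    obtain ⟨hx0, hx2, hx1⟩ := hx
    obtain ⟨hz0, hz2, hz1⟩ := hz
    simp only [Matrix.cons_val_zero, Matrix.cons_val_one, Matrix.head_cons,
      Matrix.cons_val_two, Matrix.tail_cons]
    have key : |x 1| * |z 1| ≤ (x 0 * z 0) ^ α * (x 2 * z 2) ^ (1 - α) := by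
      rw [Real.mul_rpow hx0 hz0, Real.mul_rpow hx2 hz2]
      calc |x 1| * |z 1| ≤ (x 0 ^ α * x 2 ^ (1 - α)) * (z 0 ^ α * z 2 ^ (1 - α)) :=
            mul_le_mul hx1 hz1 (abs_nonneg _) (by positivity)
        _ = x 0 ^ α * z 0 ^ α * (x 2 ^ (1 - α) * z 2 ^ (1 - α)) := by ring
    have hgm := amgm2 hα0 hα1 (mul_nonneg hx0 hz0) (mul_nonneg hx2 hz2)
    have habs : -(|x 1| * |z 1|) ≤ x 1 * z 1 := by
      rw [← abs_mul]; exact neg_abs_le _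
    nlinarith [key, hgm, habs]
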